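/- Let a_n be the number of words of length n in N_fin(p) (words over {x_0^{±1}, …, x_{p-1}^{±1}} of length n with no forbidden subword). Then the following identity of formal power series in ℚ[[t]] holds: (∑_{n≥0} a_n t^n) · (1 − t) · ((1 − t)^p + (1 − t)^{p−1} − 1) = (1 + t) · (1 − t·(1 − t)^{p−1}). -/

import Mathlib

open PowerSeries

/-- The forbidden subwords (1)–(5). -/
def Forbidden (p : ℕ) (u : List (ℕ × Bool)) : Prop :=
  (∃ (i : ℕ) (ε : Bool), i ≤ p - 1 ∧ u = [(i, ε), (i, !ε)]) ∨
  (∃ (α β k : ℕ) (ε : Bool), 1 ≤ β ∧ β < α ∧ α ≤ p - 1 ∧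
    u = (α, ε) :: (List.replicate k ((0 : ℕ), true) ++ [(β, true)])) ∨
  (∃ (α β k : ℕ) (ε : Bool), 1 ≤ β ∧ β < α ∧ α ≤ p - 1 ∧
    u = (α, ε) :: (List.replicate (k + 1) ((0 : ℕ), true) ++ [(β, false)])) ∨
  (∃ (α β k : ℕ) (ε : Bool), 1 ≤ α ∧ α ≤ β ∧ β ≤ p - 1 ∧
    u = (α, ε) :: (List.replicate (k + 1) ((0 : ℕ), true) ++ [(β, true)])) ∨
  (∃ (α β k : ℕ) (ε : Bool), 1 ≤ α ∧ α ≤ β ∧ β ≤ p - 1 ∧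
    u = (α, ε) :: (List.replicate (k + 2) ((0 : ℕ), true) ++ [(β, false)]))

/-- `N_fin(p)`: words over `x_0^{±1}, …, x_{p−1}^{±1}` with no forbidden
subword. -/
def NFin (p : ℕ) (w : List (ℕ × Bool)) : Prop :=
  (∀ a ∈ w, a.1 ≤ p - 1) ∧ ∀ u, u <:+: w → ¬ Forbidden p u



/-- States of the suffix automaton (read the word from the right). -/
inductive St where
  | empty : St
  | allz : St
  | endzb : St
  | dead : St
  | big : ℕ → Bool → St
  | bigz : ℕ → St
  | bigzz : St
deriving DecidableEq

def pushZ : St → St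
  | .empty => .allz
  | .allz => .allz
  | .big a _ => .bigz a
  | .bigz _ => .bigzz
  | .bigzz => .bigzz
  | _ => .dead

def tr : St → ℕ × Bool → St
  | σ, (0, true) => pushZ σ
  | _, (0, false) => .endzb
  | _, (Nat.succ n, e) => .big (n + 1) e

def stateR : List (ℕ × Bool) → St
  | [] => .empty
  | x :: r => tr (stateR r) x

def allowedCore : St → ℕ × Bool → Bool
  | .empty, _ => true
  | .allz, (i, e) => !(i == 0 && !e)
  | .endzb, (i, e) => !(i == 0 && e)
  | .big a e0, (i, e) =>
      if i = 0 then true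
      else if e then decide (a ≤ i) && !(i == a && !e0)
      else !(i == a && e0)
  | .bigz a, (i, e) => if i = 0 then e else !e && decide (a ≤ i)
  | .bigzz, (i, e) => i == 0 && e
  | .dead, _ => false

def allowed (p : ℕ) (σ : St) (x : ℕ × Bool) : Bool :=
  decide (x.1 ≤ p - 1) && allowedCore σ x

def valid (p : ℕ) : List (ℕ × Bool) → Bool
  | [] => true
  | x :: r => allowed p (stateR r) x && valid p r

/-- Structural description of a word with a given state. -/
def Spec (p : ℕ) : St → List (ℕ × Bool) → Prop
  | .empty, rw => rw = []
  | .allz, rw => ∃ n, 1 ≤ n ∧ rw = List.replicate n ((0:ℕ), true)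
  | .endzb, rw => ∃ r, rw = ((0:ℕ), false) :: r
  | .big a e, rw => (∃ r, rw = (a, e) :: r) ∧ 1 ≤ a ∧ a ≤ p - 1
  | .bigz a, rw => (∃ e r, rw = ((0:ℕ), true) :: (a, e) :: r) ∧ 1 ≤ a ∧ a ≤ p - 1
  | .bigzz, rw => ∃ k a e r, 2 ≤ k ∧ 1 ≤ a ∧ a ≤ p - 1 ∧
      rw = List.replicate k ((0:ℕ), true) ++ (a, e) :: r
  | .dead, _ => False

@[simp] lemma stateR_nil : stateR [] = .empty := rfl
@[simp] lemma stateR_cons {x : ℕ × Bool} {r : List (ℕ × Bool)} :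
    stateR (x :: r) = tr (stateR r) x := rfl
@[simp] lemma tr_zt (σ : St) : tr σ (0, true) = pushZ σ := rfl
@[simp] lemma tr_zf (σ : St) : tr σ (0, false) = .endzb := by cases σ <;> rfl
@[simp] lemma tr_big (σ : St) (n : ℕ) (e : Bool) : tr σ (n + 1, e) = .big (n + 1) e := by
  cases σ <;> rfl

lemma valid_cons {p : ℕ} {x : ℕ × Bool} {r : List (ℕ × Bool)} :
    valid p (x :: r) = (allowed p (stateR r) x && valid p r) := rfl

lemma spec_of_valid {p : ℕ} : ∀ {rw : List (ℕ × Bool)}, valid p rw = true →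
    Spec p (stateR rw) rw := by
  intro rw
  induction rw with
  | nil => intro _; simp only [stateR_nil]; rfl
  | cons x r ih =>
    intro hv
    rw [valid_cons, Bool.and_eq_true] at hv
    obtain ⟨ha, hv⟩ := hv
    have hs := ih hv
    obtain ⟨i, e⟩ := x
    match i, e with
    | 0, false =>
      simp only [stateR_cons, tr_zf]
      exact ⟨r, rfl⟩
    | 0, true =>
      simp only [stateR_cons, tr_zt]
      cases hσ : stateR r with
      | empty =>
        rw [hσ] at hs; exact ⟨1, le_refl _, by simp [Spec] at hs; simp [hs]⟩
      | allz =>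
        rw [hσ] at hs
        obtain ⟨n, hn, hr⟩ := hs
        exact ⟨n + 1, by omega, by simp [hr, List.replicate_succ]⟩
      | endzb =>
        rw [hσ] at ha; simp [allowed, allowedCore] at ha
      | dead =>
        rw [hσ] at hs; exact hs.elim
      | big a e0 =>
        rw [hσ] at hs
        obtain ⟨⟨rr, hr⟩, h1, h2⟩ := hs
        exact ⟨⟨e0, rr, by rw [hr]⟩, h1, h2⟩
      | bigz a =>
        rw [hσ] at hs
        obtain ⟨⟨e0, rr, hr⟩, h1, h2⟩ := hs
        exact ⟨2, a, e0, rr, le_refl _, h1, h2, by simp [hr, List.replicate]⟩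
      | bigzz =>
        rw [hσ] at hs
        obtain ⟨k, a, e0, rr, hk, h1, h2, hr⟩ := hs
        exact ⟨k + 1, a, e0, rr, by omega, h1, h2, by simp [hr, List.replicate_succ]⟩
    | Nat.succ n, e =>
      simp only [stateR_cons, tr_big]
      refine ⟨⟨r, rfl⟩, by omega, ?_⟩
      simp [allowed] at ha
      exact ha.1
-- SECTION 2: NFin ↔ valid ∘ reverse
lemma replicate_eq_aux {α : Type*} {c y y' : α} (hy : y ≠ c) (hy' : y' ≠ c) :
    ∀ {j K : ℕ} {s s' : List α},
      List.replicate j c ++ y :: s = List.replicate K c ++ y' :: s' →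
      j = K ∧ y = y' ∧ s = s' := by
  intro j
  induction j with
  | zero =>
    intro K s s' h
    cases K with
    | zero => simpa using h
    | succ K =>
      rw [List.replicate_succ] at h
      simp only [List.replicate, List.nil_append, List.cons.injEq, List.cons_append] at h
      exact absurd h.1 hy
  | succ j ih =>
    intro K s s' h
    cases K with
    | zero =>
      rw [List.replicate_succ] at h
      simp only [List.replicate, List.nil_append, List.cons.injEq, List.cons_append] at h
      exact absurd h.1.symm hy'
    | succ K =>
      rw [List.replicate_succ, List.replicate_succ] at h
      simp only [List.cons_append, List.cons.injEq] at h
      obtain ⟨h1, h2, h3⟩ := ih h.2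
      exact ⟨by omega, h2, h3⟩

lemma cons_prefix_ex {α : Type*} {y : α} {l t : List α} (h : (y :: l) <+: t) :
    ∃ r, t = y :: r ∧ l <+: r := by
  obtain ⟨s, hs⟩ := h
  exact ⟨l ++ s, by simp [← hs], ⟨s, rfl⟩⟩

lemma infix_concat_iff {α : Type*} {l : List α} {x : α} {u : List α} :
    u <:+: (l ++ [x]) ↔ u <:+: l ∨ u <:+ (l ++ [x]) := by
  constructor
  · rintro ⟨s, t, h⟩
    rcases List.eq_nil_or_concat t with rfl | ⟨t', x', rfl⟩
    · right; exact ⟨s, by simpa using h⟩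
    · left
      rw [List.concat_eq_append,
        show s ++ u ++ (t' ++ [x']) = (s ++ u ++ t') ++ [x'] by simp] at h
      obtain ⟨h1, _⟩ := List.append_inj' h rfl
      exact ⟨s, t', by simpa using h1⟩
  · rintro (h | h)
    · exact h.trans ⟨[], [x], by simp⟩
    · exact h.isInfix

lemma suffix_concat_cases {α : Type*} {u l : List α} {x : α} (h : u <:+ (l ++ [x])) :
    u = [] ∨ ∃ v, v <:+ l ∧ u = v ++ [x] := by
  rcases List.eq_nil_or_concat u with rfl | ⟨v, x', rfl⟩
  · left; rfl
  · right
    obtain ⟨s, hs⟩ := h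
    rw [List.concat_eq_append,
      show s ++ (v ++ [x']) = (s ++ v) ++ [x'] by simp] at hs
    obtain ⟨h1, h2⟩ := List.append_inj' hs rfl
    simp only [List.cons.injEq] at h2
    exact ⟨v, ⟨s, h1⟩, by rw [List.concat_eq_append, h2.1]⟩

lemma not_forbidden_nil {p : ℕ} : ¬ Forbidden p [] := by
  rintro (⟨i, ε, _, h⟩ | ⟨a, b, k, ε, _, _, _, h⟩ | ⟨a, b, k, ε, _, _, _, h⟩ |
    ⟨a, b, k, ε, _, _, _, h⟩ | ⟨a, b, k, ε, _, _, _, h⟩) <;> simp at h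

lemma forbidden_concat {p : ℕ} {v : List (ℕ × Bool)} {x : ℕ × Bool}
    (h : Forbidden p (v ++ [x])) :
    (∃ i ε, i ≤ p - 1 ∧ v = [(i, ε)] ∧ x = (i, !ε)) ∨
    (∃ a K ε b, 1 ≤ b ∧ 1 ≤ a ∧ a ≤ p - 1 ∧ b ≤ p - 1 ∧
      v = (a, ε) :: List.replicate K ((0:ℕ), true) ∧
      ((x = (b, true) ∧ (b < a ∨ (a ≤ b ∧ 1 ≤ K))) ∨
       (x = (b, false) ∧ ((b < a ∧ 1 ≤ K) ∨ (a ≤ b ∧ 2 ≤ K))))) := by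
  have split : ∀ (y : ℕ × Bool) (K : ℕ) (bb : ℕ × Bool),
      v ++ [x] = y :: (List.replicate K ((0:ℕ), true) ++ [bb]) →
      v = y :: List.replicate K ((0:ℕ), true) ∧ x = bb := by
    intro y K bb hh
    rw [show y :: (List.replicate K ((0:ℕ), true) ++ [bb]) =
      (y :: List.replicate K ((0:ℕ), true)) ++ [bb] by simp] at hh
    obtain ⟨h1, h2⟩ := List.append_inj' hh rfl
    simp only [List.cons.injEq] at h2
    exact ⟨h1, by simp [h2]⟩
  rcases h with ⟨i, ε, hi, h⟩ | ⟨a, b, k, ε, h1, h2, h3, h⟩ | ⟨a, b, k, ε, h1, h2, h3, h⟩ |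
      ⟨a, b, k, ε, h1, h2, h3, h⟩ | ⟨a, b, k, ε, h1, h2, h3, h⟩
  · left
    have : v ++ [x] = [(i, ε)] ++ [(i, !ε)] := by simpa using h
    obtain ⟨h1, h2⟩ := List.append_inj' this rfl
    exact ⟨i, ε, hi, h1, by simpa using h2⟩
  · obtain ⟨hv, hx⟩ := split _ _ _ h
    exact Or.inr ⟨a, k, ε, b, h1, by omega, h3, by omega, hv, Or.inl ⟨hx, Or.inl h2⟩⟩
  · obtain ⟨hv, hx⟩ := split _ _ _ h
    exact Or.inr ⟨a, k + 1, ε, b, h1, by omega, h3, by omega, hv,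
      Or.inr ⟨hx, Or.inl ⟨h2, by omega⟩⟩⟩
  · obtain ⟨hv, hx⟩ := split _ _ _ h
    exact Or.inr ⟨a, k + 1, ε, b, by omega, h1, by omega, h3, hv,
      Or.inl ⟨hx, Or.inr ⟨h2, by omega⟩⟩⟩
  · obtain ⟨hv, hx⟩ := split _ _ _ h
    exact Or.inr ⟨a, k + 2, ε, b, by omega, h1, by omega, h3, hv,
      Or.inr ⟨hx, Or.inr ⟨h2, by omega⟩⟩⟩
-- SECTION 3: the one-step characterization
lemma pairEq {a b : ℕ} {c d : Bool} (h : ((a, c) : ℕ × Bool) = (b, d)) :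
    a = b ∧ c = d := by rw [Prod.mk.injEq] at h; exact h

lemma step_iff {p : ℕ} {rw : List (ℕ × Bool)} (hv : valid p rw = true) (x : ℕ × Bool) :
    allowed p (stateR rw) x = true ↔
      (x.1 ≤ p - 1 ∧ ∀ v, v.reverse <+: rw → ¬ Forbidden p (v ++ [x])) := by
  obtain ⟨i, e⟩ := x
  have hs := spec_of_valid hv
  constructor
  · intro ha
    rw [allowed, Bool.and_eq_true, decide_eq_true_eq] at ha
    obtain ⟨hb, hc⟩ := ha
    refine ⟨hb, ?_⟩
    intro v hpre hF
    rcases forbidden_concat hF with ⟨i0, ε, hi0, hveq, hxeq⟩ |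
        ⟨a, K, ε, b, hb1, ha1, hap, hbp, hveq, hxc⟩
    · -- rule 1 : v = [(i0,ε)], x = (i0, !ε)
      subst hveq
      obtain ⟨rfl, rfl⟩ := pairEq hxeq
      simp only [List.reverse_cons, List.reverse_nil, List.nil_append] at hpre
      obtain ⟨t, ht, -⟩ := cons_prefix_ex hpre
      cases hσ : stateR rw with
      | empty => rw [hσ] at hs; rw [hs] at ht; exact (List.cons_ne_nil _ _) ht.symm
      | allz =>
        rw [hσ] at hs; obtain ⟨n, hn, hr⟩ := hs
        obtain ⟨n, rfl⟩ : ∃ n', n = n' + 1 := ⟨n - 1, by omega⟩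
        rw [hr, List.replicate_succ] at ht
        obtain ⟨h1, -⟩ := List.cons.inj ht.symm
        obtain ⟨h1a, h1b⟩ := pairEq h1
        subst h1a; subst h1b
        rw [hσ] at hc; simp [allowedCore] at hc
      | endzb =>
        rw [hσ] at hs; obtain ⟨r, hr⟩ := hs
        rw [hr] at ht
        obtain ⟨h1, -⟩ := List.cons.inj ht.symm
        obtain ⟨h1a, h1b⟩ := pairEq h1
        subst h1a; subst h1b
        rw [hσ] at hc; simp [allowedCore] at hc
      | dead => rw [hσ] at hs; exact hs
      | big a e0 =>
        rw [hσ] at hs; obtain ⟨⟨r, hr⟩, h1, h2⟩ := hs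
        rw [hr] at ht
        obtain ⟨h3, -⟩ := List.cons.inj ht.symm
        obtain ⟨h3a, h3b⟩ := pairEq h3
        rw [hσ] at hc
        rw [← h3a, ← h3b] at hc
        have hi1 : a ≠ 0 := by omega
        cases e0 <;> simp [allowedCore, hi1] at hc <;> omega
      | bigz a =>
        rw [hσ] at hs; obtain ⟨⟨e0, r, hr⟩, h1, h2⟩ := hs
        rw [hr] at ht
        obtain ⟨h3, -⟩ := List.cons.inj ht.symm
        obtain ⟨h3a, h3b⟩ := pairEq h3
        subst h3a; subst h3b
        rw [hσ] at hc; simp [allowedCore] at hc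
      | bigzz =>
        rw [hσ] at hs; obtain ⟨k, a, e0, r, hk, h1, h2, hr⟩ := hs
        obtain ⟨k, rfl⟩ : ∃ k', k = k' + 1 := ⟨k - 1, by omega⟩
        rw [hr, List.replicate_succ, List.cons_append] at ht
        obtain ⟨h3, -⟩ := List.cons.inj ht.symm
        obtain ⟨h3a, h3b⟩ := pairEq h3
        subst h3a; subst h3b
        rw [hσ] at hc; simp [allowedCore] at hc
    · -- rules 2-5 : v = (a,ε) :: z^K
      subst hveq
      rw [List.reverse_cons, List.reverse_replicate] at hpre
      cases hσ : stateR rw with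
      | empty =>
        rw [hσ] at hs; rw [hs, List.prefix_nil] at hpre
        simpa using congrArg List.length hpre
      | allz =>
        rw [hσ] at hs; obtain ⟨n, hn, hr⟩ := hs
        rw [hr] at hpre
        have hmem : ((a, ε) : ℕ × Bool) ∈ List.replicate n ((0:ℕ), true) :=
          hpre.sublist.mem (by simp)
        have := pairEq (List.eq_of_mem_replicate hmem)
        omega
      | endzb =>
        rw [hσ] at hs; obtain ⟨r, hr⟩ := hs
        rw [hr] at hpre
        cases K with
        | zero =>
          simp only [List.replicate, List.nil_append] at hpre
          obtain ⟨t, ht, -⟩ := cons_prefix_ex hpre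
          have := pairEq (List.cons.inj ht).1
          omega
        | succ K =>
          rw [List.replicate_succ, List.cons_append] at hpre
          obtain ⟨t, ht, -⟩ := cons_prefix_ex hpre
          have := pairEq (List.cons.inj ht).1
          simp at this
      | dead => rw [hσ] at hs; exact hs
      | big a0 e0 =>
        rw [hσ] at hs; obtain ⟨⟨r, hr⟩, h1, h2⟩ := hs
        rw [hr] at hpre
        cases K with
        | succ K =>
          rw [List.replicate_succ, List.cons_append] at hpre
          obtain ⟨t, ht, -⟩ := cons_prefix_ex hpre
          have := pairEq (List.cons.inj ht).1
          omega
        | zero =>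
          simp only [List.replicate, List.nil_append] at hpre
          obtain ⟨t, ht, -⟩ := cons_prefix_ex hpre
          obtain ⟨h3a, h3b⟩ := pairEq (List.cons.inj ht).1
          rw [hσ] at hc
          rcases hxc with ⟨hx, hcase⟩ | ⟨hx, hcase⟩
          · obtain ⟨h4a, h4b⟩ := pairEq hx
            subst h4b
            have hi1 : i ≠ 0 := by omega
            have h5 : a0 ≤ i := by
              by_contra h5
              simp [allowedCore, hi1, h5] at hc
            omega
          · obtain ⟨h4a, h4b⟩ := pairEq hx
            omega
      | bigz a0 =>
        rw [hσ] at hs; obtain ⟨⟨e0, r, hr⟩, h1, h2⟩ := hs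
        rw [hr] at hpre
        have hKa : K = 1 ∧ a = a0 ∧ ε = e0 := by
          cases K with
          | zero =>
            simp only [List.replicate, List.nil_append] at hpre
            obtain ⟨t, ht, -⟩ := cons_prefix_ex hpre
            have := pairEq (List.cons.inj ht).1
            omega
          | succ K =>
            cases K with
            | zero =>
              rw [List.replicate_succ, List.cons_append] at hpre
              obtain ⟨t, ht, hpre2⟩ := cons_prefix_ex hpre
              obtain ⟨-, h4⟩ := List.cons.inj ht
              rw [← h4] at hpre2
              simp only [List.replicate, List.nil_append] at hpre2
              obtain ⟨t2, ht2, -⟩ := cons_prefix_ex hpre2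
              obtain ⟨h5a, h5b⟩ := pairEq (List.cons.inj ht2).1
              exact ⟨rfl, h5a.symm, h5b.symm⟩
            | succ K =>
              rw [List.replicate_succ, List.replicate_succ, List.cons_append,
                List.cons_append] at hpre
              obtain ⟨t, ht, hpre2⟩ := cons_prefix_ex hpre
              obtain ⟨-, h4⟩ := List.cons.inj ht
              rw [← h4] at hpre2
              obtain ⟨t2, ht2, -⟩ := cons_prefix_ex hpre2
              have := pairEq (List.cons.inj ht2).1
              omega
        obtain ⟨rfl, h6, h7⟩ := hKa
        rw [hσ] at hc
        rcases hxc with ⟨hx, hcase⟩ | ⟨hx, hcase⟩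
        · obtain ⟨h4a, h4b⟩ := pairEq hx
          subst h4b
          have hi1 : i ≠ 0 := by omega
          simp [allowedCore, hi1] at hc
        · obtain ⟨h4a, h4b⟩ := pairEq hx
          subst h4b
          have hi1 : i ≠ 0 := by omega
          have h5 : a0 ≤ i := by
            by_contra h5
            simp [allowedCore, hi1, h5] at hc
          omega
      | bigzz =>
        rw [hσ] at hs; obtain ⟨k, a0, e0, r, hk, h1, h2, hr⟩ := hs
        rw [hr] at hpre
        obtain ⟨t, ht⟩ := hpre
        rw [List.append_assoc, List.cons_append] at ht
        obtain ⟨-, h3, -⟩ := replicate_eq_aux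
          (show ((a,ε) : ℕ × Bool) ≠ ((0:ℕ), true) by
            intro hh; have := pairEq hh; omega)
          (show ((a0,e0) : ℕ × Bool) ≠ ((0:ℕ), true) by
            intro hh; have := pairEq hh; omega) ht
        obtain ⟨h3a, h3b⟩ := pairEq h3
        rw [hσ] at hc
        rcases hxc with ⟨hx, -⟩ | ⟨hx, -⟩ <;>
          · obtain ⟨h4a, h4b⟩ := pairEq hx
            subst h4b
            have hi1 : i ≠ 0 := by omega
            simp [allowedCore, hi1] at hc
  · intro ⟨hb, hno⟩
    rw [allowed, Bool.and_eq_true, decide_eq_true_eq]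
    refine ⟨hb, ?_⟩
    by_contra hc
    rw [Bool.not_eq_true] at hc
    cases hσ : stateR rw with
    | empty => rw [hσ] at hc; simp [allowedCore] at hc
    | dead => rw [hσ] at hs; exact hs
    | allz =>
      rw [hσ] at hs; obtain ⟨n, hn, hr⟩ := hs
      rw [hσ] at hc
      obtain ⟨rfl, rfl⟩ : i = 0 ∧ e = false := by
        cases i <;> cases e <;> simp_all [allowedCore]
      refine hno [((0:ℕ), true)] ?_ (Or.inl ⟨0, true, by omega, rfl⟩)
      obtain ⟨n, rfl⟩ : ∃ n', n = n' + 1 := ⟨n - 1, by omega⟩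
      rw [hr, List.replicate_succ]
      simp
    | endzb =>
      rw [hσ] at hs; obtain ⟨r, hr⟩ := hs
      rw [hσ] at hc
      obtain ⟨rfl, rfl⟩ : i = 0 ∧ e = true := by
        cases i <;> cases e <;> simp_all [allowedCore]
      refine hno [((0:ℕ), false)] ?_ (Or.inl ⟨0, false, by omega, rfl⟩)
      rw [hr]; simp
    | big a e0 =>
      rw [hσ] at hs; obtain ⟨⟨r, hr⟩, h1, h2⟩ := hs
      rw [hσ] at hc
      have hpre : [((a : ℕ), e0)].reverse <+: rw := by rw [hr]; simp
      obtain ⟨i, rfl⟩ : ∃ i', i = i' + 1 := by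
        cases i with
        | zero => simp [allowedCore] at hc
        | succ i => exact ⟨i, rfl⟩
      cases e with
      | true =>
        by_cases hia : i + 1 < a
        · exact hno [((a:ℕ), e0)] hpre
            (Or.inr (Or.inl ⟨a, i + 1, 0, e0, by omega, hia, h2, by simp⟩))
        · by_cases hae : i + 1 = a ∧ e0 = false
          · obtain ⟨rfl, rfl⟩ := hae
            exact hno [((i+1 : ℕ), false)] hpre (Or.inl ⟨i + 1, false, h2, rfl⟩)
          · have h5 : a ≤ i + 1 := by omega
            simp [allowedCore, h5] at hc
            exact hae ⟨hc.1, hc.2⟩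
      | false =>
        have h3 : i + 1 = a ∧ e0 = true := by
          by_contra hae
          simp [allowedCore] at hc
          exact hae ⟨hc.1, hc.2⟩
        obtain ⟨rfl, rfl⟩ := h3
        exact hno [((i+1 : ℕ), true)] hpre (Or.inl ⟨i + 1, true, h2, rfl⟩)
    | bigz a =>
      rw [hσ] at hs; obtain ⟨⟨e0, r, hr⟩, h1, h2⟩ := hs
      rw [hσ] at hc
      have hpre : (((a:ℕ), e0) :: List.replicate 1 ((0:ℕ), true)).reverse <+: rw := by
        rw [hr]; simp [List.replicate]
      cases i with
      | zero =>
        have : e = false := by cases e <;> simp_all [allowedCore]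
        subst this
        refine hno [((0:ℕ), true)] ?_ (Or.inl ⟨0, true, by omega, rfl⟩)
        rw [hr]; simp
      | succ i =>
        cases e with
        | true =>
          by_cases hia : i + 1 < a
          · exact hno _ hpre
              (Or.inr (Or.inl ⟨a, i + 1, 1, e0, by omega, hia, h2, by simp⟩))
          · have hb2 : i + 1 ≤ p - 1 := hb
            exact hno _ hpre
              (Or.inr (Or.inr (Or.inr (Or.inl ⟨a, i + 1, 0, e0, h1, by omega, hb2, by simp⟩))))
        | false =>
          have hia : i + 1 < a := by
            by_contra hia
            have h5 : a ≤ i + 1 := by omega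
            simp [allowedCore, h5] at hc
          exact hno _ hpre
            (Or.inr (Or.inr (Or.inl ⟨a, i + 1, 0, e0, by omega, hia, h2, by simp⟩)))
    | bigzz =>
      rw [hσ] at hs; obtain ⟨k, a, e0, r, hk, h1, h2, hr⟩ := hs
      rw [hσ] at hc
      have hpre : (((a:ℕ), e0) :: List.replicate k ((0:ℕ), true)).reverse <+: rw := by
        rw [hr, List.reverse_cons, List.reverse_replicate]
        exact ⟨r, by simp⟩
      cases i with
      | zero =>
        have : e = false := by cases e <;> simp_all [allowedCore]
        subst this
        refine hno [((0:ℕ), true)] ?_ (Or.inl ⟨0, true, by omega, rfl⟩)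
        obtain ⟨k, rfl⟩ : ∃ k', k = k' + 1 := ⟨k - 1, by omega⟩
        rw [hr, List.replicate_succ]; simp
      | succ i =>
        have hb2 : i + 1 ≤ p - 1 := hb
        cases e with
        | true =>
          by_cases hia : i + 1 < a
          · exact hno _ hpre
              (Or.inr (Or.inl ⟨a, i + 1, k, e0, by omega, hia, h2, by simp⟩))
          · obtain ⟨k, rfl⟩ : ∃ k', k = k' + 1 := ⟨k - 1, by omega⟩
            exact hno _ hpre
              (Or.inr (Or.inr (Or.inr (Or.inl ⟨a, i + 1, k, e0, h1, by omega, hb2, by simp⟩))))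
        | false =>
          by_cases hia : i + 1 < a
          · obtain ⟨k, rfl⟩ : ∃ k', k = k' + 1 := ⟨k - 1, by omega⟩
            exact hno _ hpre
              (Or.inr (Or.inr (Or.inl ⟨a, i + 1, k, e0, by omega, hia, h2, by simp⟩)))
          · obtain ⟨k, rfl⟩ : ∃ k', k = k' + 2 := ⟨k - 2, by omega⟩
            exact hno _ hpre
              (Or.inr (Or.inr (Or.inr (Or.inr ⟨a, i + 1, k, e0, h1, by omega, hb2, by simp⟩))))
-- SECTION 4: NFin iff valid of reverse
lemma nfin_nil {p : ℕ} : NFin p [] := by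
  constructor
  · simp
  · intro u hu
    rw [List.infix_nil] at hu
    subst hu
    exact not_forbidden_nil

lemma nfin_concat_iff {p : ℕ} {w : List (ℕ × Bool)} {x : ℕ × Bool} :
    NFin p (w ++ [x]) ↔
      NFin p w ∧ (x.1 ≤ p - 1 ∧ ∀ v, v <:+ w → ¬ Forbidden p (v ++ [x])) := by
  constructor
  · rintro ⟨hbd, hnf⟩
    refine ⟨⟨fun a ha => hbd a (by simp [ha]), fun u hu => hnf u (hu.trans ⟨[], [x], by simp⟩)⟩,
      hbd x (by simp), ?_⟩
    intro v hv
    obtain ⟨s, hs⟩ := hv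
    exact hnf (v ++ [x]) (List.IsSuffix.isInfix ⟨s, by rw [← List.append_assoc, hs]⟩)
  · rintro ⟨⟨hbd, hnf⟩, hx, hcond⟩
    constructor
    · intro a ha
      rcases List.mem_append.mp ha with h | h
      · exact hbd a h
      · simp only [List.mem_singleton] at h; subst h; exact hx
    · intro u hu
      rcases infix_concat_iff.mp hu with h | h
      · exact hnf u h
      · rcases suffix_concat_cases h with rfl | ⟨v, hv, rfl⟩
        · exact not_forbidden_nil
        · exact hcond v hv
  
lemma nfin_iff_valid {p : ℕ} (w : List (ℕ × Bool)) :
    NFin p w ↔ valid p w.reverse = true := by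
  induction w using List.reverseRecOn with
  | nil =>
    simp only [List.reverse_nil]
    exact ⟨fun _ => rfl, fun _ => nfin_nil⟩
  | append_singleton w x ih =>
    rw [nfin_concat_iff, ih]
    have hrv : (w ++ [x]).reverse = x :: w.reverse := by simp
    rw [hrv, valid_cons, Bool.and_eq_true]
    constructor
    · rintro ⟨hv, hx, hcond⟩
      refine ⟨(step_iff hv x).2 ⟨hx, ?_⟩, hv⟩
      intro v hpre
      exact hcond v (List.reverse_prefix.mp hpre)
    · rintro ⟨ha, hv⟩
      obtain ⟨hx, hcond⟩ := (step_iff hv x).1 ha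
      exact ⟨hv, hx, fun v hv' => hcond v (List.reverse_prefix.mpr hv')⟩
-- SECTION 5: counting
def alphabet (p : ℕ) : Finset (ℕ × Bool) := Finset.range p ×ˢ Finset.univ

def words (p : ℕ) : ℕ → Finset (List (ℕ × Bool))
  | 0 => {[]}
  | n + 1 => ((alphabet p) ×ˢ (words p n)).image fun q => q.1 :: q.2

lemma words_zero (p : ℕ) : words p 0 = {[]} := rfl
lemma words_succ (p n : ℕ) :
    words p (n + 1) = ((alphabet p) ×ˢ (words p n)).image (fun q => q.1 :: q.2) := rfl

lemma mem_words {p n : ℕ} {rw : List (ℕ × Bool)} :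
    rw ∈ words p n ↔ rw.length = n ∧ ∀ a ∈ rw, a.1 < p := by
  induction n generalizing rw with
  | zero =>
    rw [words_zero]
    simp only [Finset.mem_singleton]
    constructor
    · rintro rfl; simp
    · rintro ⟨h, -⟩; exact List.length_eq_zero_iff.mp h
  | succ n ih =>
    rw [words_succ]
    simp only [Finset.mem_image, Finset.mem_product]
    constructor
    · rintro ⟨⟨x, r⟩, ⟨hx, hr⟩, rfl⟩
      obtain ⟨h1, h2⟩ := ih.mp hr
      refine ⟨by simp [h1], ?_⟩
      intro a ha
      rcases List.mem_cons.mp ha with rfl | ha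
      · simp only [alphabet, Finset.mem_product, Finset.mem_range] at hx
        exact hx.1
      · exact h2 a ha
    · rintro ⟨hlen, hbd⟩
      cases rw with
      | nil => simp at hlen
      | cons x r =>
        refine ⟨(x, r), ⟨?_, ih.mpr ⟨by simpa using hlen, fun a ha => hbd a (by simp [ha])⟩⟩, rfl⟩
        simp only [alphabet, Finset.mem_product, Finset.mem_range, Finset.mem_univ, and_true]
        exact hbd x (by simp)

def cnt (p n : ℕ) (f : St → Bool) : ℚ :=
  ∑ rw ∈ words p n, if valid p rw && f (stateR rw) then 1 else 0

lemma cnt_zero (p : ℕ) (f : St → Bool) :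
    cnt p 0 f = if f .empty then 1 else 0 := by
  rw [cnt, words_zero, Finset.sum_singleton]
  have hv : valid p [] = true := rfl
  rw [stateR_nil, hv, Bool.true_and]

lemma cnt_congr_plain {p n : ℕ} {f g : St → Bool} (h : ∀ σ, f σ = g σ) :
    cnt p n f = cnt p n g := by
  unfold cnt
  exact Finset.sum_congr rfl fun rw _ => by rw [h (stateR rw)]

lemma cnt_congr {p n : ℕ} {f g : St → Bool}
    (h : ∀ rw, valid p rw = true → f (stateR rw) = g (stateR rw)) :
    cnt p n f = cnt p n g := by
  unfold cnt
  refine Finset.sum_congr rfl fun rw _ => ?_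
  cases hv : valid p rw
  · simp
  · rw [h rw hv]

lemma cnt_false {p n : ℕ} : cnt p n (fun _ => false) = 0 := by
  simp [cnt]

lemma cnt_zero' {p n : ℕ} {f : St → Bool} (h : ∀ σ, f σ = false) : cnt p n f = 0 := by
  rw [cnt_congr_plain h, cnt_false]

lemma cnt_or {p n : ℕ} {f g : St → Bool}
    (h : ∀ σ, ¬(f σ = true ∧ g σ = true)) :
    cnt p n (fun σ => f σ || g σ) = cnt p n f + cnt p n g := by
  unfold cnt
  rw [← Finset.sum_add_distrib]
  refine Finset.sum_congr rfl fun rw _ => ?_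
  cases hv : valid p rw
  · simp
  · have := h (stateR rw)
    cases hf : f (stateR rw) <;> cases hg : g (stateR rw) <;> simp_all

lemma cnt_succ (p n : ℕ) (f : St → Bool) :
    cnt p (n + 1) f =
      ∑ x ∈ alphabet p, cnt p n (fun σ => allowed p σ x && f (tr σ x)) := by
  unfold cnt
  rw [words_succ, Finset.sum_image, Finset.sum_product]
  · refine Finset.sum_congr rfl fun x _ => Finset.sum_congr rfl fun rw _ => ?_
    have hcond : (valid p (x :: rw) && f (stateR (x :: rw)))
        = (valid p rw && (allowed p (stateR rw) x && f (tr (stateR rw) x))) := by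
      rw [valid_cons, stateR_cons]
      cases valid p rw <;> cases allowed p (stateR rw) x <;>
        cases f (tr (stateR rw) x) <;> rfl
    rw [hcond]
  · rintro ⟨x, r⟩ - ⟨x', r'⟩ - h
    simp only [List.cons.injEq] at h
    simp [Prod.ext_iff, h.1, h.2]

lemma sum_alphabet {M : Type*} [AddCommMonoid M] (p : ℕ) (F : ℕ × Bool → M) :
    ∑ x ∈ alphabet p, F x = ∑ i ∈ Finset.range p, (F (i, true) + F (i, false)) := by
  rw [alphabet, Finset.sum_product]
  exact Finset.sum_congr rfl fun i _ => by rw [Fintype.sum_bool]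

-- selectors
def selE : St → Bool | .empty => true | _ => false
def selZ : St → Bool | .allz => true | _ => false
def selZb : St → Bool | .endzb => true | _ => false
def selH : St → Bool | .bigzz => true | _ => false
def selBAll : St → Bool | .big _ _ => true | _ => false
def selGAll : St → Bool | .bigz _ => true | _ => false
def selB (c : ℕ) : St → Bool | .big b _ => decide (1 ≤ b ∧ b ≤ c) | _ => false
def selBT (a : ℕ) : St → Bool | .big b e => e && decide (b = a) | _ => false
def selG (c : ℕ) : St → Bool | .bigz b => decide (1 ≤ b ∧ b ≤ c) | _ => false
-- SECTION 6: transition identities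
def selBX (a : ℕ) : St → Bool | .big b e => !(e && decide (b = a)) | _ => false

lemma cnt_selBAll {p n : ℕ} : cnt p n selBAll = cnt p n (selB (p - 1)) := by
  refine cnt_congr fun rw hv => ?_
  have hs := spec_of_valid hv
  cases hσ : stateR rw <;> rw [hσ] at hs <;>
    first
    | rfl
    | exact hs.elim
    | (obtain ⟨-, h1, h2⟩ := hs; simp [selBAll, selB, h1, h2])

lemma cnt_selGAll {p n : ℕ} : cnt p n selGAll = cnt p n (selG (p - 1)) := by
  refine cnt_congr fun rw hv => ?_
  have hs := spec_of_valid hv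
  cases hσ : stateR rw <;> rw [hσ] at hs <;>
    first
    | rfl
    | exact hs.elim
    | (obtain ⟨-, h1, h2⟩ := hs; simp [selGAll, selG, h1, h2])

lemma T1 {p n : ℕ} (hp : 2 ≤ p) :
    cnt p (n + 1) selZ = cnt p n selE + cnt p n selZ := by
  rw [cnt_succ, sum_alphabet]
  rw [Finset.sum_eq_single_of_mem 0 (Finset.mem_range.mpr (by omega))]
  · have h2 : cnt p n (fun σ => allowed p σ (0, false) && selZ (tr σ (0, false))) = 0 :=
      cnt_zero' fun σ => by simp [tr_zf, selZ]
    have h1 : cnt p n (fun σ => allowed p σ (0, true) && selZ (tr σ (0, true)))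
        = cnt p n (fun σ => selE σ || selZ σ) := cnt_congr_plain fun σ => by
          cases σ <;> simp [allowed, allowedCore, pushZ, selE, selZ]
    rw [h1, h2, add_zero, cnt_or fun σ => by cases σ <;> simp [selE, selZ]]
  · intro b hb hb0
    obtain ⟨i, rfl⟩ : ∃ i, b = i + 1 := ⟨b - 1, by omega⟩
    have h3 : ∀ e : Bool, cnt p n (fun σ => allowed p σ (i + 1, e) && selZ (tr σ (i + 1, e))) = 0 :=
      fun e => cnt_zero' fun σ => by simp [tr_big, selZ]
    rw [h3, h3, add_zero]

lemma T2 {p n : ℕ} (hp : 2 ≤ p) :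
    cnt p (n + 1) selZb = cnt p n selE + cnt p n selZb + cnt p n (selB (p - 1)) := by
  rw [cnt_succ, sum_alphabet]
  rw [Finset.sum_eq_single_of_mem 0 (Finset.mem_range.mpr (by omega))]
  · have h1 : cnt p n (fun σ => allowed p σ (0, true) && selZb (tr σ (0, true))) = 0 :=
      cnt_zero' fun σ => by cases σ <;> simp [tr_zt, pushZ, selZb]
    have h2 : cnt p n (fun σ => allowed p σ (0, false) && selZb (tr σ (0, false)))
        = cnt p n (fun σ => (selE σ || selZb σ) || selBAll σ) := cnt_congr_plain fun σ => by
          cases σ <;> simp [allowed, allowedCore, tr_zf, selE, selZb, selBAll]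
    rw [h1, h2, zero_add,
      cnt_or (f := fun σ => selE σ || selZb σ) fun σ => by cases σ <;> simp [selE, selZb, selBAll],
      cnt_or fun σ => by cases σ <;> simp [selE, selZb], cnt_selBAll]
  · intro b hb hb0
    obtain ⟨i, rfl⟩ : ∃ i, b = i + 1 := ⟨b - 1, by omega⟩
    have h3 : ∀ e : Bool, cnt p n (fun σ => allowed p σ (i + 1, e) && selZb (tr σ (i + 1, e))) = 0 :=
      fun e => cnt_zero' fun σ => by simp [tr_big, selZb]
    rw [h3, h3, add_zero]

lemma T3 {p n : ℕ} (hp : 2 ≤ p) (c : ℕ) :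
    cnt p (n + 1) (selG c) = cnt p n (selB c) := by
  rw [cnt_succ, sum_alphabet]
  rw [Finset.sum_eq_single_of_mem 0 (Finset.mem_range.mpr (by omega))]
  · have h2 : cnt p n (fun σ => allowed p σ (0, false) && selG c (tr σ (0, false))) = 0 :=
      cnt_zero' fun σ => by simp [tr_zf, selG]
    have h1 : cnt p n (fun σ => allowed p σ (0, true) && selG c (tr σ (0, true)))
        = cnt p n (selB c) := cnt_congr_plain fun σ => by
          cases σ <;> simp [allowed, allowedCore, tr_zt, pushZ, selG, selB]
    rw [h1, h2, add_zero]
  · intro b hb hb0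
    obtain ⟨i, rfl⟩ : ∃ i, b = i + 1 := ⟨b - 1, by omega⟩
    have h3 : ∀ e : Bool, cnt p n (fun σ => allowed p σ (i + 1, e) && selG c (tr σ (i + 1, e))) = 0 :=
      fun e => cnt_zero' fun σ => by simp [tr_big, selG]
    rw [h3, h3, add_zero]

lemma T4 {p n : ℕ} (hp : 2 ≤ p) :
    cnt p (n + 1) selH = cnt p n (selG (p - 1)) + cnt p n selH := by
  rw [cnt_succ, sum_alphabet]
  rw [Finset.sum_eq_single_of_mem 0 (Finset.mem_range.mpr (by omega))]
  · have h2 : cnt p n (fun σ => allowed p σ (0, false) && selH (tr σ (0, false))) = 0 :=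
      cnt_zero' fun σ => by simp [tr_zf, selH]
    have h1 : cnt p n (fun σ => allowed p σ (0, true) && selH (tr σ (0, true)))
        = cnt p n (fun σ => selGAll σ || selH σ) := cnt_congr_plain fun σ => by
          cases σ <;> simp [allowed, allowedCore, tr_zt, pushZ, selGAll, selH]
    rw [h1, h2, add_zero, cnt_or fun σ => by cases σ <;> simp [selGAll, selH], cnt_selGAll]
  · intro b hb hb0
    obtain ⟨i, rfl⟩ : ∃ i, b = i + 1 := ⟨b - 1, by omega⟩
    have h3 : ∀ e : Bool, cnt p n (fun σ => allowed p σ (i + 1, e) && selH (tr σ (i + 1, e))) = 0 :=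
      fun e => cnt_zero' fun σ => by simp [tr_big, selH]
    rw [h3, h3, add_zero]

lemma T7 {p n : ℕ} : cnt p (n + 1) selE = 0 := by
  rw [cnt_succ]
  refine Finset.sum_eq_zero fun x _ => ?_
  obtain ⟨i, e⟩ := x
  match i, e with
  | 0, true => exact cnt_zero' fun σ => by cases σ <;> simp [tr_zt, pushZ, selE]
  | 0, false => exact cnt_zero' fun σ => by simp [tr_zf, selE]
  | Nat.succ i, e => exact cnt_zero' fun σ => by simp [tr_big, selE]

lemma T6 {p n : ℕ} :
    cnt p n (fun _ => true) = cnt p n selE + cnt p n selZ + cnt p n selZb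
      + cnt p n (selB (p - 1)) + cnt p n (selG (p - 1)) + cnt p n selH := by
  have h : cnt p n (fun _ => true) =
      cnt p n (fun σ => ((((selE σ || selZ σ) || selZb σ) || selBAll σ) || selGAll σ) || selH σ) := by
    refine cnt_congr fun rw hv => ?_
    have hs := spec_of_valid hv
    cases hσ : stateR rw <;> rw [hσ] at hs <;>
      first
      | exact hs.elim
      | simp [selE, selZ, selZb, selBAll, selGAll, selH]
  rw [h, cnt_or (fun σ => by cases σ <;> simp [selE, selZ, selZb, selBAll, selGAll, selH]),
    cnt_or (fun σ => by cases σ <;> simp [selE, selZ, selZb, selBAll, selGAll]),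
    cnt_or (fun σ => by cases σ <;> simp [selE, selZ, selZb, selBAll]),
    cnt_or (fun σ => by cases σ <;> simp [selE, selZ, selZb]),
    cnt_or (fun σ => by cases σ <;> simp [selE, selZ]), cnt_selBAll, cnt_selGAll]
-- SECTION 7: the main big-letter transition
lemma C5a {p n a' : ℕ} (hp : 2 ≤ p) (ha2 : a' + 1 ≤ p - 1) :
    cnt p n (fun σ => allowed p σ (a' + 1, true))
      + cnt p n (fun σ => allowed p σ (a' + 1, false))
    = 2 * (cnt p n selE + cnt p n selZ + cnt p n selZb)
      + cnt p n (selB a') + cnt p n (selB (p - 1)) + cnt p n (selG (a' + 1)) := by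
  have hA : cnt p n (fun σ => allowed p σ (a' + 1, true))
      = cnt p n (fun σ => (((selE σ || selZ σ) || selZb σ) || selB a' σ) || selBT (a' + 1) σ) := by
    refine cnt_congr fun rw hv => ?_
    have hs := spec_of_valid hv
    cases hσ : stateR rw <;> rw [hσ] at hs
    case empty => simp [allowed, allowedCore, selE, selZ, selZb, selB, selBT, ha2]
    case allz => simp [allowed, allowedCore, selE, selZ, selZb, selB, selBT, ha2]
    case endzb => simp [allowed, allowedCore, selE, selZ, selZb, selB, selBT, ha2]
    case dead => exact hs.elim
    case bigz b => simp [allowed, allowedCore, selE, selZ, selZb, selB, selBT, ha2]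
    case bigzz => simp [allowed, allowedCore, selE, selZ, selZb, selB, selBT, ha2]
    case big b e =>
      obtain ⟨-, h1, h2⟩ := hs
      rw [Bool.eq_iff_iff]
      cases e <;>
        simp [allowed, allowedCore, selE, selZ, selZb, selB, selBT, ha2] <;>
        omega
  have hB : cnt p n (fun σ => allowed p σ (a' + 1, false))
      = cnt p n (fun σ => (((selE σ || selZ σ) || selZb σ) || selBX (a' + 1) σ) || selG (a' + 1) σ) := by
    refine cnt_congr fun rw hv => ?_
    have hs := spec_of_valid hv
    cases hσ : stateR rw <;> rw [hσ] at hs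
    case empty => simp [allowed, allowedCore, selE, selZ, selZb, selBX, selG, ha2]
    case allz => simp [allowed, allowedCore, selE, selZ, selZb, selBX, selG, ha2]
    case endzb => simp [allowed, allowedCore, selE, selZ, selZb, selBX, selG, ha2]
    case dead => exact hs.elim
    case bigzz => simp [allowed, allowedCore, selE, selZ, selZb, selBX, selG, ha2]
    case bigz b =>
      obtain ⟨-, h1, h2⟩ := hs
      rw [Bool.eq_iff_iff]
      simp [allowed, allowedCore, selE, selZ, selZb, selBX, selG, ha2, h1]
    case big b e =>
      obtain ⟨-, h1, h2⟩ := hs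
      rw [Bool.eq_iff_iff]
      cases e <;>
        simp [allowed, allowedCore, selE, selZ, selZb, selBX, selG, ha2] <;>
        omega
  have hC : cnt p n (selBX (a' + 1)) + cnt p n (selBT (a' + 1)) = cnt p n (selB (p - 1)) := by
    rw [← cnt_or (fun σ => by cases σ with
      | big b e => cases e <;> simp [selBX, selBT]
      | _ => simp [selBX, selBT])]
    rw [← cnt_selBAll]
    refine cnt_congr_plain fun σ => ?_
    cases σ with
    | big b e =>
      cases e <;> cases hd : decide (b = a' + 1) <;> simp [selBX, selBT, selBAll, hd]
    | _ => simp [selBX, selBT, selBAll]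
  rw [hA, hB]
  rw [cnt_or (fun σ => by cases σ with
      | big b e => simp [selE, selZ, selZb, selB, selBT]; omega
      | _ => simp [selE, selZ, selZb, selB, selBT]),
    cnt_or (fun σ => by cases σ <;> simp [selE, selZ, selZb, selB]),
    cnt_or (fun σ => by cases σ <;> simp [selE, selZ, selZb]),
    cnt_or (fun σ => by cases σ <;> simp [selE, selZ]),
    cnt_or (fun σ => by cases σ <;> simp [selE, selZ, selZb, selBX, selG]),
    cnt_or (fun σ => by cases σ <;> simp [selE, selZ, selZb, selBX]),
    cnt_or (fun σ => by cases σ <;> simp [selE, selZb, selZ]),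
    cnt_or (fun σ => by cases σ <;> simp [selE, selZ])]
  linarith [hC]

lemma T5 {p n a : ℕ} (hp : 2 ≤ p) (ha1 : 1 ≤ a) (ha2 : a ≤ p - 1) :
    cnt p (n + 1) (selB a) = cnt p (n + 1) (selB (a - 1))
      + (2 * (cnt p n selE + cnt p n selZ + cnt p n selZb)
        + cnt p n (selB (a - 1)) + cnt p n (selB (p - 1)) + cnt p n (selG a)) := by
  obtain ⟨a', rfl⟩ : ∃ a', a = a' + 1 := ⟨a - 1, by omega⟩
  simp only [Nat.add_sub_cancel]
  have hmem : a' + 1 ∈ Finset.range p := Finset.mem_range.mpr (by omega)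
  rw [cnt_succ, sum_alphabet, cnt_succ, sum_alphabet]
  rw [← Finset.add_sum_erase _ _ hmem, ← Finset.add_sum_erase _ _ hmem]
  have herase : ∑ i ∈ (Finset.range p).erase (a' + 1),
        (cnt p n (fun σ => allowed p σ (i, true) && selB (a' + 1) (tr σ (i, true)))
          + cnt p n (fun σ => allowed p σ (i, false) && selB (a' + 1) (tr σ (i, false))))
      = ∑ i ∈ (Finset.range p).erase (a' + 1),
        (cnt p n (fun σ => allowed p σ (i, true) && selB a' (tr σ (i, true)))
          + cnt p n (fun σ => allowed p σ (i, false) && selB a' (tr σ (i, false)))) := by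
    refine Finset.sum_congr rfl fun i hi => ?_
    have hia : i ≠ a' + 1 := (Finset.mem_erase.mp hi).1
    have key : ∀ e : Bool,
        cnt p n (fun σ => allowed p σ (i, e) && selB (a' + 1) (tr σ (i, e)))
          = cnt p n (fun σ => allowed p σ (i, e) && selB a' (tr σ (i, e))) := by
      intro e
      refine cnt_congr_plain fun σ => ?_
      match i, e with
      | 0, true => cases σ <;> simp [tr_zt, pushZ, selB]
      | 0, false => simp [tr_zf, selB]
      | Nat.succ j, e =>
        have : selB (a' + 1) (.big (j + 1) e) = selB a' (.big (j + 1) e) := by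
          simp only [selB]
          exact decide_eq_decide.mpr (by omega)
        rw [tr_big, this]
    rw [key, key]
  rw [herase]
  have hz : ∀ e : Bool,
      cnt p n (fun σ => allowed p σ (a' + 1, e) && selB a' (tr σ (a' + 1, e))) = 0 := by
    intro e
    refine cnt_zero' fun σ => ?_
    rw [tr_big]
    have : selB a' (.big (a' + 1) e) = false := by
      simp only [selB]
      exact decide_eq_false (by omega)
    rw [this, Bool.and_false]
  have ht : ∀ e : Bool,
      cnt p n (fun σ => allowed p σ (a' + 1, e) && selB (a' + 1) (tr σ (a' + 1, e)))
        = cnt p n (fun σ => allowed p σ (a' + 1, e)) := by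
    intro e
    refine cnt_congr_plain fun σ => ?_
    rw [tr_big]
    have : selB (a' + 1) (.big (a' + 1) e) = true := by
      simp only [selB]
      exact decide_eq_true (by omega)
    rw [this, Bool.and_true]
  rw [hz, hz, ht, ht]
  have := C5a (n := n) hp ha2
  linarith
-- SECTION 8: bridge from Nat.card to cnt
lemma card_bridge {p n : ℕ} (hp : 2 ≤ p) :
    ((Nat.card {w : List (ℕ × Bool) // w.length = n ∧ NFin p w} : ℚ))
      = cnt p n (fun _ => true) := by
  have e : {w : List (ℕ × Bool) // w.length = n ∧ NFin p w} ≃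
      {rw // rw ∈ (words p n).filter (fun rw => valid p rw)} :=
    { toFun := fun w => ⟨w.1.reverse, by
        obtain ⟨w, h1, h2⟩ := w
        rw [Finset.mem_filter, mem_words]
        refine ⟨⟨by simpa using h1, ?_⟩, ?_⟩
        · intro a ha
          have := h2.1 a (by simpa using ha)
          omega
        · exact (nfin_iff_valid w).mp h2⟩
      invFun := fun rw => ⟨rw.1.reverse, by
        obtain ⟨rw, h⟩ := rw
        rw [Finset.mem_filter, mem_words] at h
        refine ⟨by simpa using h.1.1, ?_⟩
        rw [nfin_iff_valid, List.reverse_reverse]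
        exact h.2⟩
      left_inv := fun w => Subtype.ext (by simp)
      right_inv := fun rw => Subtype.ext (by simp) }
  rw [Nat.card_congr e, Nat.card_eq_finsetCard, Finset.card_filter]
  push_cast
  unfold cnt
  refine Finset.sum_congr rfl fun rw _ => ?_
  cases hv : valid p rw <;> simp [hv]

-- SECTION 9: power series
lemma ser_shift {u : ℕ → ℚ} {v : PowerSeries ℚ} (h0 : u 0 = 0)
    (h : ∀ n, u (n + 1) = (PowerSeries.coeff n) v) :
    PowerSeries.mk u = X * v := by
  ext n
  cases n with
  | zero => simp [PowerSeries.coeff_mk, h0]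
  | succ n => rw [PowerSeries.coeff_mk, PowerSeries.coeff_succ_X_mul, h n]

lemma cntE_eq {p n : ℕ} : cnt p n selE = if n = 0 then 1 else 0 := by
  cases n with
  | zero => rw [cnt_zero]; simp [selE]
  | succ n => rw [T7]; simp

noncomputable def serS (p : ℕ) (f : St → Bool) : PowerSeries ℚ :=
  PowerSeries.mk fun n => cnt p n f

lemma coeff_serS {p n : ℕ} {f : St → Bool} :
    (PowerSeries.coeff n) (serS p f) = cnt p n f := PowerSeries.coeff_mk _ _


/-- Formula (20): the generating function `Φ_p(t) = ∑ a_n tⁿ` counting words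
of length `n` in `N_fin(p)` satisfies
`Φ_p(t)(1 − t)((1 − t)^p + (1 − t)^{p−1} − 1) = (1 + t)(1 − t(1 − t)^{p−1})`. -/
theorem stmt16 (p : ℕ) (hp : 2 ≤ p) :
    (PowerSeries.mk fun n =>
        ((Nat.card {w : List (ℕ × Bool) // w.length = n ∧ NFin p w} : ℚ))) *
        (1 - X) * ((1 - X) ^ p + (1 - X) ^ (p - 1) - 1) =
      (1 + X) * (1 - X * (1 - X) ^ (p - 1)) := by
  obtain ⟨m, rfl⟩ : ∃ m, p = m + 1 := ⟨p - 1, by omega⟩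
  have hm : 1 ≤ m := by omega
  simp only [Nat.add_sub_cancel]
  have hq2 : 2 ≤ m + 1 := by omega
  have hqm : m + 1 - 1 = m := by omega
  -- basic equations
  have P1 : serS (m+1) selZ = X * (1 + serS (m+1) selZ) := by
    refine ser_shift (by rw [cnt_zero]; simp [selZ]) fun n => ?_
    rw [T1 hq2]
    simp only [map_add, PowerSeries.coeff_one, coeff_serS, cntE_eq]
  have P2 : serS (m+1) selZb = X * (serS (m+1) selZb + serS (m+1) (selB m) + 1) := by
    refine ser_shift (by rw [cnt_zero]; simp [selZb]) fun n => ?_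
    rw [T2 hq2, hqm]
    simp only [map_add, PowerSeries.coeff_one, coeff_serS, cntE_eq]
    ring
  have P3 : serS (m+1) selH = X * (serS (m+1) (selG m) + serS (m+1) selH) := by
    refine ser_shift (by rw [cnt_zero]; simp [selH]) fun n => ?_
    rw [T4 hq2, hqm]
    simp only [map_add, coeff_serS]
  have P4 : ∀ c, serS (m+1) (selG c) = X * serS (m+1) (selB c) := by
    intro c
    refine ser_shift (by rw [cnt_zero]; simp [selG]) fun n => ?_
    rw [T3 hq2]
    simp only [coeff_serS]
  have P6 : serS (m+1) (selB 0) = 0 := by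
    have hz : ∀ n, cnt (m+1) n (selB 0) = 0 := fun n => cnt_zero' fun σ => by
      cases σ with
      | big b e => simp only [selB]; exact decide_eq_false (by omega)
      | _ => rfl
    ext n
    simp [serS, PowerSeries.coeff_mk, hz]
  have P5 : ∀ a, 1 ≤ a → a ≤ m →
      serS (m+1) (selB a) - serS (m+1) (selB (a - 1)) =
        X * (((1 + serS (m+1) selZ + serS (m+1) selZb) + (1 + serS (m+1) selZ + serS (m+1) selZb))
          + serS (m+1) (selB (a - 1)) + serS (m+1) (selB m) + serS (m+1) (selG a)) := by
    intro a ha1 ha2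
    have hmk : serS (m+1) (selB a) - serS (m+1) (selB (a - 1))
        = PowerSeries.mk (fun n => cnt (m+1) n (selB a) - cnt (m+1) n (selB (a - 1))) := by
      ext n
      simp [serS, PowerSeries.coeff_mk]
    rw [hmk]
    refine ser_shift (by rw [cnt_zero, cnt_zero]; simp [selB]) fun n => ?_
    rw [T5 hq2 ha1 (by omega), hqm]
    simp only [map_add, PowerSeries.coeff_one, coeff_serS, cntE_eq]
    ring
  have P7 : serS (m+1) (fun _ => true) = 1 + serS (m+1) selZ + serS (m+1) selZb
      + serS (m+1) (selB m) + serS (m+1) (selG m) + serS (m+1) selH := by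
    ext n
    rw [show (PowerSeries.coeff n) (serS (m+1) (fun _ => true)) = cnt (m+1) n (fun _ => true)
      from coeff_serS, T6, hqm]
    simp only [map_add, PowerSeries.coeff_one, coeff_serS, cntE_eq]
  -- algebra
  have step2 : (1 - X) * (1 + serS (m+1) selZ + serS (m+1) selZb)
      = 1 + X + X * serS (m+1) (selB m) := by
    linear_combination P1 + P2
  have Ind : ∀ a, a ≤ m → (1 + X) * (1 - X) ^ a * serS (m+1) (selB a)
      = X * (2 * (1 + serS (m+1) selZ + serS (m+1) selZb) + serS (m+1) (selB m))
        * (∑ j ∈ Finset.range a, (1 - X) ^ j) := by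
    intro a
    induction a with
    | zero => intro _; simp [P6]
    | succ a ih =>
      intro ha
      have ih' := ih (by omega)
      have e1 := P5 (a + 1) (by omega) ha
      have e2 := P4 (a + 1)
      rw [Nat.add_sub_cancel] at e1
      rw [Finset.sum_range_succ]
      linear_combination ih' + (1 - X) ^ a * e1 + X * (1 - X) ^ a * e2
  have step1 : X * (∑ j ∈ Finset.range m, ((1 : PowerSeries ℚ) - X) ^ j)
      = 1 - (1 - X) ^ m := by
    linear_combination - geom_sum_mul ((1 : PowerSeries ℚ) - X) m
  have h1X : (1 + X : PowerSeries ℚ) ≠ 0 := by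
    intro h
    have := congrArg (PowerSeries.constantCoeff (R := ℚ)) h
    simp at this
  have step3 : (1 + X) * ((1 - X) ^ (m + 1) * serS (m+1) (selB m))
      = (1 + X) * ((1 - (1 - X) ^ m) * (2 + serS (m+1) (selB m))) := by
    have indm := Ind m le_rfl
    linear_combination (1 - X) * indm
      + 2 * X * (∑ j ∈ Finset.range m, ((1 : PowerSeries ℚ) - X) ^ j) * step2
      + (1 + X) * (2 + serS (m+1) (selB m)) * step1
  have Fsolve : (1 - X) ^ (m + 1) * serS (m+1) (selB m)
      = (1 - (1 - X) ^ m) * (2 + serS (m+1) (selB m)) :=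
    mul_left_cancel₀ h1X step3
  have step5 : serS (m+1) (selB m) * ((1 - X) ^ (m + 1) + (1 - X) ^ m - 1)
      = 2 - 2 * (1 - X) ^ m := by
    linear_combination Fsolve
  have hG : serS (m+1) (selG m) = X * serS (m+1) (selB m) := P4 m
  have hH : (1 - X) * serS (m+1) selH = X ^ 2 * serS (m+1) (selB m) := by
    linear_combination P3 + X * hG
  have step6 : (1 - X) * serS (m+1) (fun _ => true)
      = (1 + X) * (1 + serS (m+1) (selB m)) := by
    linear_combination (1 - X) * P7 + step2 + (1 - X) * hG + hH
  have bridge : (PowerSeries.mk fun n =>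
      ((Nat.card {w : List (ℕ × Bool) // w.length = n ∧ NFin (m+1) w} : ℚ)))
      = serS (m+1) (fun _ => true) := by
    ext n
    rw [PowerSeries.coeff_mk, show (PowerSeries.coeff n) (serS (m+1) (fun _ => true))
      = cnt (m+1) n (fun _ => true) from coeff_serS, card_bridge hq2]
  rw [bridge]
  linear_combination ((1 - X) ^ (m+1) + (1 - X) ^ m - 1) * step6 + (1 + X) * step5
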